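/- arXiv:math/0310283 — 3 statements merged into one kernel-verified Lean document; each statement's English description precedes it below -/
import Mathlib

section
/- (Wick theorem for the free boson) For any nonempty finite list of nonzero integers m_1, …, m_n, the vacuum expectation value ⟨β_{m_1} ∘ β_{m_2} ∘ ⋯ ∘ β_{m_n}⟩ equals the sum over all perfect matchings M of the index set {1, …, n} of the product ∏_{{i,j}∈M, i<j} c(m_i, m_j), where the contraction c(a, b) equals a if a > 0 and b = −a, and equals 0 otherwise. In particular the vacuum expectation value vanishes when n is odd. -/
open MvPolynomial

/-- `Λ = ℚ[p_1, p_2, …]`, the polynomial ring in countably many variables `p_n`, `n ≥ 1`. -/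
abbrev Lambda : Type := MvPolynomial ℕ+ ℚ

/-- The bosonic operators: `β_n f = p_{-n}·f` for `n < 0`, `β_0 = 0`,
`β_n f = n·∂f/∂p_n` for `n > 0`. -/
noncomputable def beta (n : ℤ) : Module.End ℚ Lambda :=
  if h : n < 0 then
    LinearMap.mulLeft ℚ (X (⟨n.natAbs, Int.natAbs_pos.mpr (by omega)⟩ : ℕ+))
  else if h' : 0 < n then
    (n : ℚ) • (pderiv (⟨n.natAbs, Int.natAbs_pos.mpr (by omega)⟩ : ℕ+)).toLinearMap
  else 0

/-- The vacuum expectation value `⟨A⟩`: the coefficient of the constant monomial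
in `A(1) ∈ Λ`. -/
noncomputable def vev (A : Module.End ℚ Lambda) : ℚ := constantCoeff (A 1)

/-- The contraction `c(a, b)`: equals `a` if `a > 0` and `b = −a`, and `0` otherwise. -/
def contraction (a b : ℤ) : ℚ := if 0 < a ∧ b = -a then (a : ℚ) else 0

/-- A perfect matching of `Fin n`, encoded as a fixed-point-free involutive
permutation: the two-element blocks of the matching are the orbits `{i, f i}`. -/
def IsPerfectMatching {n : ℕ} (f : Equiv.Perm (Fin n)) : Prop :=
  f * f = 1 ∧ ∀ i, f i ≠ i

instance {n : ℕ} : DecidablePred (IsPerfectMatching (n := n)) := fun f =>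
  inferInstanceAs (Decidable (_ ∧ _))

lemma pderiv_comm' {σ R : Type*} [CommSemiring R] [DecidableEq σ] (i j : σ) (f : MvPolynomial σ R) :
    pderiv i (pderiv j f) = pderiv j (pderiv i f) := by
  induction f using MvPolynomial.induction_on' with
  | monomial s a =>
    rcases eq_or_ne i j with rfl | hij
    · rfl
    · simp only [pderiv_monomial, Finsupp.tsub_apply, Finsupp.single_apply]
      rw [if_neg (Ne.symm hij), if_neg hij]
      simp only [Nat.sub_zero]
      rw [tsub_right_comm]
      ring_nf
  | add p q hp hq => simp [hp, hq]

lemma beta_pos_apply (a : ℤ) (ha : 0 < a) (f : Lambda) :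
    beta a f = (a : ℚ) • pderiv (Nat.toPNat a.natAbs (Int.natAbs_pos.mpr (by omega))) f := by
  rw [beta, dif_neg (by omega), dif_pos ha]; rfl

lemma beta_neg_apply (b : ℤ) (hb : b < 0) (f : Lambda) :
    beta b f = (X (Nat.toPNat b.natAbs (Int.natAbs_pos.mpr (by omega))) : Lambda) * f := by
  rw [beta, dif_pos hb]; rfl

lemma beta_pos_one (a : ℤ) (ha : 0 < a) : beta a 1 = 0 := by
  rw [beta_pos_apply a ha, pderiv_one, smul_zero]

lemma constantCoeff_beta_neg (b : ℤ) (hb : b < 0) (f : Lambda) :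
    constantCoeff (beta b f) = 0 := by
  rw [beta_neg_apply b hb, map_mul, constantCoeff_X, zero_mul]

lemma beta_comm (a b : ℤ) (ha : 0 < a) (hb : b ≠ 0) :
    beta a * beta b = beta b * beta a + contraction a b • (1 : Module.End ℚ Lambda) := by
  rcases lt_or_gt_of_ne hb with hb' | hb'
  · -- b < 0
    have hab : (b = -a) ↔ ((⟨a.natAbs, Int.natAbs_pos.mpr (by omega)⟩ : ℕ+) =
        (⟨b.natAbs, Int.natAbs_pos.mpr (by omega)⟩ : ℕ+)) := by
      constructor
      · rintro rfl; ext; simp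
      · intro h
        have := congrArg (fun x : ℕ+ => (x : ℕ)) h
        simp only [PNat.mk_coe] at this
        omega
    refine LinearMap.ext fun f => ?_
    rw [Module.End.mul_apply, LinearMap.add_apply, Module.End.mul_apply,
      LinearMap.smul_apply, Module.End.one_apply,
      beta_neg_apply b hb', beta_pos_apply a ha, beta_pos_apply a ha,
      beta_neg_apply b hb', pderiv_mul, pderiv_X, Pi.single_apply, contraction]
    rcases eq_or_ne b (-a) with rfl | hne
    · rw [if_pos (show Nat.toPNat _ _ = Nat.toPNat _ _ from (hab.mp rfl).symm), if_pos ⟨ha, rfl⟩, one_mul]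
      rw [smul_add, mul_smul_comm]
      rw [add_comm]
    · rw [if_neg (show ¬ Nat.toPNat _ _ = Nat.toPNat _ _ from fun h => hne (hab.mpr h.symm)), if_neg (by tauto), zero_mul, zero_add,
        zero_smul, add_zero, mul_smul_comm]
  · -- b > 0
    have hc : contraction a b = 0 := by
      rw [contraction, if_neg]; rintro ⟨-, rfl⟩; omega
    rw [hc, zero_smul, add_zero]
    refine LinearMap.ext fun f => ?_
    rw [Module.End.mul_apply, Module.End.mul_apply,
      beta_pos_apply b hb', beta_pos_apply a ha, Derivation.map_smul,
      beta_pos_apply a ha, beta_pos_apply b hb', Derivation.map_smul,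
      pderiv_comm', smul_comm]

noncomputable def BB {k : ℕ} (v : Fin k → ℤ) : Module.End ℚ Lambda :=
  (List.ofFn fun i => beta (v i)).prod

lemma BB_zero (v : Fin 0 → ℤ) : BB v = 1 := by simp [BB]

lemma BB_succ {k : ℕ} (v : Fin (k + 1) → ℤ) :
    BB v = beta (v 0) * BB (fun i => v i.succ) := by
  simp [BB, List.ofFn_succ]

lemma push (a : ℤ) (ha : 0 < a) : ∀ (k : ℕ) (v : Fin (k + 1) → ℤ), (∀ i, v i ≠ 0) →
    beta a * BB v = BB v * beta a
      + ∑ j : Fin (k + 1), contraction a (v j) • BB (fun i : Fin k => v (j.succAbove i)) := by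
  intro k
  induction k with
  | zero =>
    intro v hv
    rw [BB_succ v, BB_zero, mul_one, Fin.sum_univ_one,
      show (BB fun i : Fin 0 => v ((0 : Fin 1).succAbove i)) = 1 from BB_zero _]
    exact beta_comm a (v 0) ha (hv 0)
  | succ k ih =>
    intro v hv
    have hs : ∀ j : Fin (k + 1),
        (BB fun i : Fin (k + 1) => v (j.succ.succAbove i))
          = beta (v 0) * BB (fun i : Fin k => v ((j.succAbove i).succ)) := by
      intro j
      rw [BB_succ]
      congr 1
      · exact congrArg BB (funext fun i => by rw [Fin.succ_succAbove_succ])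
    rw [BB_succ v, ← mul_assoc, beta_comm a (v 0) ha (hv 0), add_mul, smul_mul_assoc, one_mul,
      mul_assoc, ih (fun i => v i.succ) (fun i => hv i.succ), mul_add, ← mul_assoc,
      Fin.sum_univ_succ
        (f := fun j : Fin (k + 2) => contraction a (v j) • BB fun i => v (j.succAbove i))]
    simp only [Fin.succAbove_zero, hs, Finset.mul_sum, mul_smul_comm]
    abel

def S {k : ℕ} (v : Fin k → ℤ) : ℚ :=
  ∑ f ∈ Finset.univ.filter (fun f : Equiv.Perm (Fin k) => IsPerfectMatching f),
    ∏ i ∈ Finset.univ.filter (fun i => i < f i), contraction (v i) (v (f i))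

lemma matching_invol {n : ℕ} {f : Equiv.Perm (Fin n)} (hf : IsPerfectMatching f) (i : Fin n) :
    f (f i) = i := by
  have h : (f * f) i = (1 : Equiv.Perm (Fin n)) i := by rw [hf.1]
  simpa using h

lemma S_zero (v : Fin 0 → ℤ) : S v = 1 := by
  rw [S]
  have h1 : (Finset.univ.filter (fun f : Equiv.Perm (Fin 0) => IsPerfectMatching f)) = {1} := by
    apply Finset.eq_singleton_iff_unique_mem.mpr
    refine ⟨Finset.mem_filter.mpr ⟨Finset.mem_univ _, ⟨mul_one 1, fun i => i.elim0⟩⟩,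
      fun f _ => Subsingleton.elim f 1⟩
  rw [h1, Finset.sum_singleton]
  simp

lemma S_one (v : Fin 1 → ℤ) : S v = 0 := by
  rw [S, Finset.filter_eq_empty_iff.mpr fun f _ hf => hf.2 0 (Subsingleton.elim _ _),
    Finset.sum_empty]

lemma S_neg {k : ℕ} (v : Fin (k + 1) → ℤ) (h : ¬ 0 < v 0) : S v = 0 := by
  rw [S]
  apply Finset.sum_eq_zero
  intro f hf
  rw [Finset.mem_filter] at hf
  apply Finset.prod_eq_zero (i := (0 : Fin (k + 1)))
  · simp only [Finset.mem_filter, Finset.mem_univ, true_and]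
    exact (Fin.pos_iff_ne_zero' (f 0)).mpr (hf.2.2 0)
  · rw [contraction, if_neg]
    tauto

section Emb

variable {k : ℕ}

def emb (j : Fin (k + 1)) : Fin k → Fin (k + 2) := fun i => (j.succAbove i).succ

lemma emb_strictMono (j : Fin (k + 1)) : StrictMono (emb j) := fun a b h =>
  Fin.succ_lt_succ_iff.mpr (Fin.strictMono_succAbove j h)

lemma emb_injective (j : Fin (k + 1)) : Function.Injective (emb j) :=
  (emb_strictMono j).injective

lemma emb_ne_zero (j : Fin (k + 1)) (i : Fin k) : emb j i ≠ 0 := Fin.succ_ne_zero _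

lemma emb_ne_p (j : Fin (k + 1)) (i : Fin k) : emb j i ≠ j.succ := by
  intro h
  exact Fin.succAbove_ne j i (Fin.succ_injective _ h)

lemma emb_classify (j : Fin (k + 1)) (x : Fin (k + 2)) :
    x = 0 ∨ x = j.succ ∨ ∃ i, emb j i = x := by
  rcases eq_or_ne x 0 with rfl | hx0
  · exact Or.inl rfl
  rcases eq_or_ne x j.succ with rfl | hxp
  · exact Or.inr (Or.inl rfl)
  obtain ⟨y, rfl⟩ := Fin.exists_succAbove_eq hx0 (y := 0)
  rw [Fin.succAbove_zero] at *
  obtain ⟨i, rfl⟩ := Fin.exists_succAbove_eq (fun h => hxp (congrArg Fin.succ h)) (y := j)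
  exact Or.inr (Or.inr ⟨i, rfl⟩)

noncomputable def phi (j : Fin (k + 1)) (g : Equiv.Perm (Fin k)) : Equiv.Perm (Fin (k + 2)) :=
  Equiv.swap 0 j.succ * g.viaFintypeEmbedding ⟨emb j, emb_injective j⟩

lemma phi_apply_zero (j : Fin (k + 1)) (g : Equiv.Perm (Fin k)) : phi j g 0 = j.succ := by
  rw [phi, Equiv.Perm.mul_apply, Equiv.Perm.viaFintypeEmbedding_apply_notMem_range,
    Equiv.swap_apply_left]
  rintro ⟨i, hi⟩
  exact emb_ne_zero j i hi

lemma phi_apply_p (j : Fin (k + 1)) (g : Equiv.Perm (Fin k)) : phi j g j.succ = 0 := by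
  rw [phi, Equiv.Perm.mul_apply, Equiv.Perm.viaFintypeEmbedding_apply_notMem_range,
    Equiv.swap_apply_right]
  rintro ⟨i, hi⟩
  exact emb_ne_p j i hi

lemma phi_apply_emb (j : Fin (k + 1)) (g : Equiv.Perm (Fin k)) (i : Fin k) :
    phi j g (emb j i) = emb j (g i) := by
  rw [phi, Equiv.Perm.mul_apply]
  rw [show (emb j i) = (⟨emb j, emb_injective j⟩ : Fin k ↪ Fin (k + 2)) i from rfl,
    Equiv.Perm.viaFintypeEmbedding_apply_image]
  exact Equiv.swap_apply_of_ne_of_ne (emb_ne_zero j (g i)) (emb_ne_p j (g i))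

lemma phi_matching (j : Fin (k + 1)) (g : Equiv.Perm (Fin k)) (hg : IsPerfectMatching g) :
    IsPerfectMatching (phi j g) := by
  constructor
  · apply Equiv.ext
    intro x
    rw [Equiv.Perm.mul_apply, Equiv.Perm.one_apply]
    rcases emb_classify j x with rfl | rfl | ⟨i, rfl⟩
    · rw [phi_apply_zero, phi_apply_p]
    · rw [phi_apply_p, phi_apply_zero]
    · rw [phi_apply_emb, phi_apply_emb, matching_invol hg]
  · intro x
    rcases emb_classify j x with rfl | rfl | ⟨i, rfl⟩
    · rw [phi_apply_zero]; exact (Fin.succ_ne_zero j)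
    · rw [phi_apply_p]; exact fun h => Fin.succ_ne_zero j h.symm
    · rw [phi_apply_emb]
      exact fun h => hg.2 i (emb_injective j h)

noncomputable def psi (j : Fin (k + 1)) (f : Equiv.Perm (Fin (k + 2))) : Fin k → Fin k :=
  fun i => @Function.invFun _ _ ⟨i⟩ (emb j) (f (emb j i))

lemma psi_spec (j : Fin (k + 1)) (f : Equiv.Perm (Fin (k + 2))) (hf : IsPerfectMatching f)
    (hf0 : f 0 = j.succ) (i : Fin k) : emb j (psi j f i) = f (emb j i) := by
  have hp : f j.succ = 0 := by rw [← hf0, matching_invol hf]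
  have h1 : f (emb j i) ≠ 0 := by
    intro h
    have := congrArg f h
    rw [matching_invol hf, hf0] at this
    exact emb_ne_p j i this
  have h2 : f (emb j i) ≠ j.succ := by
    intro h
    have := congrArg f h
    rw [matching_invol hf, hp] at this
    exact emb_ne_zero j i this
  haveI : Nonempty (Fin k) := ⟨i⟩
  rcases emb_classify j (f (emb j i)) with h | h | ⟨b, hb⟩
  · exact absurd h h1
  · exact absurd h h2
  · rw [psi, ← hb]
    exact congrArg (emb j) (Function.leftInverse_invFun (emb_injective j) b)

lemma psi_invol (j : Fin (k + 1)) (f : Equiv.Perm (Fin (k + 2))) (hf : IsPerfectMatching f)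
    (hf0 : f 0 = j.succ) : Function.Involutive (psi j f) := by
  intro i
  apply emb_injective j
  rw [psi_spec j f hf hf0, psi_spec j f hf hf0, matching_invol hf]

noncomputable def psiPerm (j : Fin (k + 1)) (f : Equiv.Perm (Fin (k + 2)))
    (hf : IsPerfectMatching f) (hf0 : f 0 = j.succ) : Equiv.Perm (Fin k) :=
  Function.Involutive.toPerm (psi j f) (psi_invol j f hf hf0)

lemma psiPerm_matching (j : Fin (k + 1)) (f : Equiv.Perm (Fin (k + 2)))
    (hf : IsPerfectMatching f) (hf0 : f 0 = j.succ) :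
    IsPerfectMatching (psiPerm j f hf hf0) := by
  constructor
  · apply Equiv.ext
    intro i
    rw [Equiv.Perm.mul_apply, Equiv.Perm.one_apply]
    exact psi_invol j f hf hf0 i
  · intro i h
    have : emb j (psi j f i) = emb j i := congrArg (emb j) h
    rw [psi_spec j f hf hf0] at this
    exact hf.2 (emb j i) this

end Emb

lemma phi_filter {k : ℕ} (j : Fin (k + 1)) (g : Equiv.Perm (Fin k)) :
    Finset.univ.filter (fun x => x < phi j g x)
      = insert 0 ((Finset.univ.filter (fun i => i < g i)).image (emb j)) := by
  ext x
  simp only [Finset.mem_filter, Finset.mem_univ, true_and, Finset.mem_insert, Finset.mem_image]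
  rcases emb_classify j x with rfl | rfl | ⟨i, rfl⟩
  · rw [phi_apply_zero]
    simp only [eq_self_iff_true, true_or, iff_true]
    exact Fin.succ_pos j
  · rw [phi_apply_p]
    constructor
    · intro h; exact absurd h (Fin.not_lt_zero _)
    · rintro (h | ⟨i, -, hi⟩)
      · exact absurd h (Fin.succ_ne_zero j)
      · exact absurd hi (emb_ne_p j i)
  · rw [phi_apply_emb]
    constructor
    · intro h
      exact Or.inr ⟨i, (emb_strictMono j).lt_iff_lt.mp h, rfl⟩
    · rintro (h | ⟨i', hi', he⟩)
      · exact absurd h (emb_ne_zero j i)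
      · obtain rfl := emb_injective j he
        exact (emb_strictMono j).lt_iff_lt.mpr hi'

lemma phi_prod {k : ℕ} (v : Fin (k + 2) → ℤ) (j : Fin (k + 1)) (g : Equiv.Perm (Fin k)) :
    ∏ x ∈ Finset.univ.filter (fun x => x < phi j g x), contraction (v x) (v (phi j g x))
      = contraction (v 0) (v j.succ) *
        ∏ i ∈ Finset.univ.filter (fun i => i < g i),
          contraction (v (emb j i)) (v (emb j (g i))) := by
  rw [phi_filter, Finset.prod_insert]
  · rw [phi_apply_zero, Finset.prod_image (fun a _ b _ h => emb_injective j h)]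
    congr 1
    exact Finset.prod_congr rfl fun i _ => by rw [phi_apply_emb]
  · simp only [Finset.mem_image]
    rintro ⟨i, -, hi⟩
    exact emb_ne_zero j i hi

lemma S_rec {k : ℕ} (v : Fin (k + 2) → ℤ) :
    S v = ∑ j : Fin (k + 1), contraction (v 0) (v j.succ)
            * S (fun i : Fin k => v (emb j i)) := by
  rw [S, ← Finset.sum_fiberwise_of_maps_to (g := fun f : Equiv.Perm (Fin (k + 2)) => f 0)
    (t := (Finset.univ : Finset (Fin (k + 2)))) (fun _ _ => Finset.mem_univ _),
    Fin.sum_univ_succ]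
  have h0 : ((Finset.univ.filter fun f : Equiv.Perm (Fin (k + 2)) => IsPerfectMatching f).filter
      (fun f => f 0 = 0)) = ∅ := by
    rw [Finset.filter_eq_empty_iff]
    intro f hf h
    exact (Finset.mem_filter.mp hf).2.2 0 h
  rw [h0, Finset.sum_empty, zero_add]
  refine Finset.sum_congr rfl fun j _ => ?_
  rw [S, Finset.mul_sum]
  have hmem : ∀ f : Equiv.Perm (Fin (k + 2)),
      f ∈ ((Finset.univ.filter fun f : Equiv.Perm (Fin (k + 2)) => IsPerfectMatching f).filter
        (fun f => f 0 = j.succ)) → IsPerfectMatching f ∧ f 0 = j.succ := fun f hf =>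
    ⟨(Finset.mem_filter.mp (Finset.mem_filter.mp hf).1).2, (Finset.mem_filter.mp hf).2⟩
  refine Finset.sum_bij'
    (i := fun f hf => psiPerm j f (hmem f hf).1 (hmem f hf).2)
    (j := fun g _ => phi j g) ?_ ?_ ?_ ?_ ?_
  · intro f hf
    exact Finset.mem_filter.mpr ⟨Finset.mem_univ _, psiPerm_matching j f _ _⟩
  · intro g hg
    exact Finset.mem_filter.mpr ⟨Finset.mem_filter.mpr
      ⟨Finset.mem_univ _, phi_matching j g (Finset.mem_filter.mp hg).2⟩, phi_apply_zero j g⟩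
  · intro f hf
    apply Equiv.ext
    intro x
    rcases emb_classify j x with rfl | rfl | ⟨i, rfl⟩
    · rw [phi_apply_zero, (hmem f hf).2]
    · rw [phi_apply_p]
      rw [← (hmem f hf).2, matching_invol (hmem f hf).1]
    · rw [phi_apply_emb]
      exact (psi_spec j f (hmem f hf).1 (hmem f hf).2 i).symm ▸ rfl
  · intro g hg
    apply Equiv.ext
    intro i
    apply emb_injective j
    have h1 : (psiPerm j (phi j g) (phi_matching j g (Finset.mem_filter.mp hg).2)
        (phi_apply_zero j g)) i = psi j (phi j g) i := rfl
    calc emb j ((psiPerm j (phi j g) _ _) i)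
        = phi j g (emb j i) := psi_spec j (phi j g) (phi_matching j g (Finset.mem_filter.mp hg).2)
          (phi_apply_zero j g) i
      _ = emb j (g i) := phi_apply_emb j g i
  · intro f hf
    have hfg : phi j (psiPerm j f (hmem f hf).1 (hmem f hf).2) = f := by
      apply Equiv.ext
      intro x
      rcases emb_classify j x with rfl | rfl | ⟨i, rfl⟩
      · rw [phi_apply_zero, (hmem f hf).2]
      · rw [phi_apply_p, ← (hmem f hf).2, matching_invol (hmem f hf).1]
      · rw [phi_apply_emb]
        exact (psi_spec j f (hmem f hf).1 (hmem f hf).2 i)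
    conv_lhs => rw [← hfg]
    exact phi_prod v j (psiPerm j f (hmem f hf).1 (hmem f hf).2)

lemma matching_even {n : ℕ} (f : Equiv.Perm (Fin n)) (hf : IsPerfectMatching f) : Even n := by
  have h1 : ∀ i, f (f i) = i := matching_invol hf
  set A := Finset.univ.filter (fun i : Fin n => i < f i) with hA
  set B := Finset.univ.filter (fun i : Fin n => f i < i) with hB
  have hunion : A ∪ B = Finset.univ := by
    ext i
    simp only [hA, hB, Finset.mem_union, Finset.mem_filter, Finset.mem_univ, true_and,
      iff_true]
    exact lt_or_gt_of_ne (Ne.symm (hf.2 i))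
  have hdisj : Disjoint A B := by
    rw [Finset.disjoint_left]
    intro i hiA hiB
    rw [hA, Finset.mem_filter] at hiA
    rw [hB, Finset.mem_filter] at hiB
    exact absurd hiB.2 (not_lt.mpr hiA.2.le)
  have hcard : A.card = B.card := by
    apply Finset.card_bij (fun a _ => f a)
    · intro a ha
      rw [hA, Finset.mem_filter] at ha
      rw [hB, Finset.mem_filter]
      exact ⟨Finset.mem_univ _, by rw [h1]; exact ha.2⟩
    · intro a _ b _ h
      exact f.injective h
    · intro b hb
      rw [hB, Finset.mem_filter] at hb
      refine ⟨f b, ?_, h1 b⟩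
      rw [hA, Finset.mem_filter]
      exact ⟨Finset.mem_univ _, by rw [h1]; exact hb.2⟩
  have : n = A.card + B.card := by
    rw [← Finset.card_union_of_disjoint hdisj, hunion, Finset.card_univ, Fintype.card_fin]
  exact ⟨A.card, by omega⟩

lemma main_wick : ∀ (n : ℕ) (v : Fin n → ℤ), (∀ i, v i ≠ 0) → vev (BB v) = S v := by
  intro n
  induction n using Nat.strong_induction_on with
  | _ n ih =>
    intro v hv
    match n, v, hv, ih with
    | 0, v, hv, _ =>
      rw [S_zero, vev, BB_zero, Module.End.one_apply, map_one]
    | 1, v, hv, _ =>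
      rw [S_one, vev, BB_succ, BB_zero, mul_one]
      rcases lt_or_gt_of_ne (hv 0) with h | h
      · exact constantCoeff_beta_neg _ h 1
      · rw [beta_pos_one _ h, map_zero]
    | (k + 2), v, hv, ih =>
      rcases lt_or_gt_of_ne (hv 0) with h | h
      · rw [vev, BB_succ, Module.End.mul_apply, constantCoeff_beta_neg _ h,
          S_neg v (by omega : ¬ 0 < v 0)]
      · have hw : ∀ i : Fin (k + 1), v i.succ ≠ 0 := fun i => hv i.succ
        rw [vev, BB_succ, push (v 0) h k (fun i => v i.succ) hw, LinearMap.add_apply,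
          Module.End.mul_apply, beta_pos_one _ h, map_zero, map_add, map_zero, zero_add,
          LinearMap.sum_apply, map_sum, S_rec]
        refine Finset.sum_congr rfl fun j _ => ?_
        simp only [emb]
        rw [LinearMap.smul_apply, smul_eq_C_mul, map_mul, constantCoeff_C,
          ← ih k (by omega) (fun i => v ((j.succAbove i).succ)) (fun i => hv _), vev]

/-- Wick's theorem for the free boson: for any nonempty finite list `m_1, …, m_n` of
nonzero integers, `⟨β_{m_1} ∘ ⋯ ∘ β_{m_n}⟩` is the sum over all perfect matchings `M`
of `{1, …, n}` of `∏_{{i,j}∈M, i<j} c(m_i, m_j)`; in particular it vanishes for `n` odd. -/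
theorem wick_theorem {n : ℕ} (hn : 1 ≤ n) (m : Fin n → ℤ) (hm : ∀ i, m i ≠ 0) :
    (vev (List.ofFn fun i => beta (m i)).prod =
      ∑ f ∈ Finset.univ.filter (fun f : Equiv.Perm (Fin n) => IsPerfectMatching f),
        ∏ i ∈ Finset.univ.filter (fun i => i < f i), contraction (m i) (m (f i))) ∧
    (Odd n → vev (List.ofFn fun i => beta (m i)).prod = 0) := by
  refine ⟨main_wick n m hm, fun hodd => ?_⟩
  have h2 : S m = 0 := by
    rw [S, Finset.filter_eq_empty_iff.mpr
      (fun f _ hf => (Nat.not_even_iff_odd.mpr hodd) (matching_even f hf)), Finset.sum_empty]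
  exact (main_wick n m hm).trans h2
end

section
/- For any two sequences (a_n)_{n≥1} and (a_{−n})_{n≥1} of rationals, the following identity of formal power series in t over ℚ holds: ∑_{(μ,ν)} (∏_i a_{μ_i})·(∏_j a_{−ν_j})·⟨β_μ ∘ β_{−ν}⟩·t^{|μ|+|ν|}/(z_μ·z_ν) = exp(∑_{n≥1} (a_n·a_{−n}/n)·t^{2n}), where the sum on the left is over all pairs of partitions (μ, ν); the left-hand side is the expansion of ⟨exp(∑_{n≥1} (a_n t^n/n) β_n) · exp(∑_{n≥1} (a_{−n} t^n/n) β_{−n})⟩. -/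
open MvPolynomial

lemma pderiv_pderiv_comm {σ : Type*} (i j : σ) (p : MvPolynomial σ ℚ) :
    pderiv i (pderiv j p) = pderiv j (pderiv i p) := by
  classical
  induction p using MvPolynomial.induction_on with
  | C a => simp
  | add p q hp hq => simp [hp, hq]
  | mul_X p s ih =>
    simp only [pderiv_mul, map_add, ih, pderiv_X, Pi.single_apply]
    split_ifs <;> simp <;> ring

lemma beta_zero : beta 0 = 0 := by simp [beta]

lemma beta_of_pos {n : ℤ} (h : 0 < n) :
    beta n = (n : ℚ) • (pderiv (⟨n.natAbs, Int.natAbs_pos.mpr (by omega)⟩ : ℕ+)).toLinearMap := by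
  rw [beta, dif_neg (by omega), dif_pos h]

lemma beta_of_neg {n : ℤ} (h : n < 0) :
    beta n = LinearMap.mulLeft ℚ (X (⟨n.natAbs, Int.natAbs_pos.mpr (by omega)⟩ : ℕ+) : Lambda) := by
  rw [beta, dif_pos h]

/-- Operators `β_m`, `β_n` with `m, n ≥ 0` commute. -/
lemma beta_nonneg_commute {m n : ℤ} (hm : 0 ≤ m) (hn : 0 ≤ n) :
    Commute (beta m) (beta n) := by
  rcases hm.eq_or_lt with rfl | h1
  · rw [beta_zero]; exact Commute.zero_left _
  rcases hn.eq_or_lt with rfl | h2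
  · rw [beta_zero]; exact Commute.zero_right _
  rw [beta_of_pos h1, beta_of_pos h2]
  have key : ((pderiv (⟨m.natAbs, Int.natAbs_pos.mpr (by omega)⟩ : ℕ+)).toLinearMap :
      Module.End ℚ Lambda) * (pderiv (⟨n.natAbs, Int.natAbs_pos.mpr (by omega)⟩ : ℕ+)).toLinearMap =
      (pderiv (⟨n.natAbs, Int.natAbs_pos.mpr (by omega)⟩ : ℕ+)).toLinearMap *
        (pderiv (⟨m.natAbs, Int.natAbs_pos.mpr (by omega)⟩ : ℕ+)).toLinearMap :=
    LinearMap.ext fun p => pderiv_pderiv_comm _ _ p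
  exact (Commute.smul_left key _).smul_right _

/-- Operators `β_m`, `β_n` with `m, n ≤ 0` commute. -/
lemma beta_nonpos_commute {m n : ℤ} (hm : m ≤ 0) (hn : n ≤ 0) :
    Commute (beta m) (beta n) := by
  rcases hm.lt_or_eq with h1 | rfl
  swap
  · rw [beta_zero]; exact Commute.zero_left _
  rcases hn.lt_or_eq with h2 | rfl
  swap
  · rw [beta_zero]; exact Commute.zero_right _
  rw [beta_of_neg h1, beta_of_neg h2]
  refine LinearMap.ext fun p => ?_
  simp only [Module.End.mul_apply, LinearMap.mulLeft_apply]
  ring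

/-- For a partition `μ` (the multiset of its parts), the operator
`β_μ = β_{μ_1} ∘ ⋯ ∘ β_{μ_l}`. -/
noncomputable def betaPos (μ : Multiset ℕ) : Module.End ℚ Lambda :=
  (μ.map fun a : ℕ => beta (a : ℤ)).noncommProd (by
    intro x hx y hy _
    obtain ⟨a, _, rfl⟩ := Multiset.mem_map.mp hx
    obtain ⟨b, _, rfl⟩ := Multiset.mem_map.mp hy
    exact beta_nonneg_commute (Int.natCast_nonneg _) (Int.natCast_nonneg _))

/-- For a partition `ν` (the multiset of its parts), the operator
`β_{−ν} = β_{−ν_1} ∘ ⋯ ∘ β_{−ν_l}`. -/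
noncomputable def betaNeg (ν : Multiset ℕ) : Module.End ℚ Lambda :=
  (ν.map fun a : ℕ => beta (-(a : ℤ))).noncommProd (by
    intro x hx y hy _
    obtain ⟨a, _, rfl⟩ := Multiset.mem_map.mp hx
    obtain ⟨b, _, rfl⟩ := Multiset.mem_map.mp hy
    exact beta_nonpos_commute (by simp) (by simp))

/-- For a partition `μ`, `z_μ = ∏_k k^{m_k}·m_k!`. -/
noncomputable def zPart (μ : Multiset ℕ) : ℚ :=
  ∏ a ∈ μ.toFinset, ((a : ℚ) ^ μ.count a * (μ.count a).factorial)

/-- The formal exponential of a power series (with zero constant term). -/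
noncomputable def fexp (f : PowerSeries ℚ) : PowerSeries ℚ :=
  PowerSeries.mk fun N =>
    ∑ m ∈ Finset.range (N + 1), (PowerSeries.coeff N (f ^ m)) / m.factorial

/-! ### Chunk 1: action of beta operators -/

lemma noncommProd_congr' {M : Type*} [Monoid M] {s t : Multiset M} (h : s = t)
    (c : {x | x ∈ s}.Pairwise Commute) : s.noncommProd c = t.noncommProd (h ▸ c) := by
  subst h; rfl

noncomputable def Xn (a : ℕ) : Lambda :=
  if h : 0 < a then (X (Nat.toPNat a h) : Lambda) else 0

lemma beta_neg_natCast (a : ℕ) : beta (-(a : ℤ)) = LinearMap.mulLeft ℚ (Xn a) := by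
  rcases Nat.eq_zero_or_pos a with rfl | ha
  · simp only [Nat.cast_zero, neg_zero, beta_zero, Xn, dif_neg (lt_irrefl 0)]
    ext p
    simp
  · rw [beta_of_neg (by omega : -(a:ℤ) < 0), Xn, dif_pos ha]
    congr 2
    apply PNat.eq
    simp
    rfl

lemma betaNeg_cons (a : ℕ) (ν : Multiset ℕ) :
    betaNeg (a ::ₘ ν) = beta (-(a : ℤ)) * betaNeg ν := by
  rw [betaNeg, betaNeg]
  exact (noncommProd_congr' (Multiset.map_cons _ _ _) _).trans (Multiset.noncommProd_cons ..)

lemma betaPos_cons' (a : ℕ) (μ : Multiset ℕ) :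
    betaPos (a ::ₘ μ) = betaPos μ * beta (a : ℤ) := by
  rw [betaPos, betaPos]
  exact (noncommProd_congr' (Multiset.map_cons _ _ _) _).trans (Multiset.noncommProd_cons' ..)

lemma betaPos_zero : betaPos 0 = 1 := by
  rw [betaPos]; simp

lemma betaNeg_apply_one (ν : Multiset ℕ) : betaNeg ν 1 = (ν.map Xn).prod := by
  induction ν using Multiset.induction_on with
  | empty => rw [betaNeg]; simp
  | cons a ν ih =>
      rw [betaNeg_cons, Multiset.map_cons, Multiset.prod_cons, Module.End.mul_apply, ih,
        beta_neg_natCast, LinearMap.mulLeft_apply]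

lemma pderiv_Xn_self {a : ℕ} (ha : 0 < a) : pderiv (Nat.toPNat a ha) (Xn a) = 1 := by
  rw [Xn, dif_pos ha, pderiv_X, Pi.single_eq_same]

lemma pderiv_Xn_ne {a b : ℕ} (ha : 0 < a) (hab : b ≠ a) :
    pderiv (Nat.toPNat a ha) (Xn b) = 0 := by
  rcases Nat.eq_zero_or_pos b with rfl | hb
  · rw [Xn, dif_neg (lt_irrefl 0), map_zero]
  · rw [Xn, dif_pos hb, pderiv_X, Pi.single_eq_of_ne]
    intro h
    exact hab (congrArg (fun x : ℕ+ => (x : ℕ)) h)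

lemma pderiv_prod_Xn {a : ℕ} (ha : 0 < a) (ν : Multiset ℕ) :
    pderiv (Nat.toPNat a ha) ((ν.map Xn).prod) =
      (ν.count a) • (((ν.erase a).map Xn).prod) := by
  induction ν using Multiset.induction_on with
  | empty => simp
  | cons b ν ih =>
      rw [Multiset.map_cons, Multiset.prod_cons, pderiv_mul, ih]
      rcases eq_or_ne b a with rfl | hba
      · rw [pderiv_Xn_self ha, one_mul, Multiset.count_cons_self, Multiset.erase_cons_head,
          add_smul, one_smul]
        rcases Decidable.em (b ∈ ν) with hmem | hmem
        · have hrw : Xn b * (((ν.erase b).map Xn).prod) = ((ν.map Xn).prod) := by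
            conv_rhs => rw [← Multiset.cons_erase hmem]
            rw [Multiset.map_cons, Multiset.prod_cons]
          rw [mul_smul_comm, hrw, add_comm]
        · rw [Multiset.count_eq_zero_of_notMem hmem]
          simp
      · rw [pderiv_Xn_ne ha hba, zero_mul, zero_add,
          Multiset.count_cons_of_ne (Ne.symm hba), Multiset.erase_cons_tail _ hba,
          Multiset.map_cons, Multiset.prod_cons, mul_smul_comm]

/-! ### Chunk 2: zPart and vev computation -/

lemma zPart_zero : zPart 0 = 1 := by simp [zPart]

lemma zPart_cons (a : ℕ) (m : Multiset ℕ) :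
    zPart (a ::ₘ m) = (a * (m.count a + 1) : ℚ) * zPart m := by
  classical
  rw [zPart, zPart, Multiset.toFinset_cons]
  rcases Decidable.em (a ∈ m.toFinset) with h | h
  · rw [Finset.insert_eq_self.mpr h]
    rw [← Finset.mul_prod_erase _ _ h, ← Finset.mul_prod_erase _ _ h]
    have hc : ∀ x ∈ m.toFinset.erase a, Multiset.count x (a ::ₘ m) = Multiset.count x m := by
      intro x hx
      exact Multiset.count_cons_of_ne (Finset.ne_of_mem_erase hx) _
    rw [Finset.prod_congr rfl (fun x hx => by rw [hc x hx])]
    rw [Multiset.count_cons_self]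
    push_cast [Nat.factorial_succ]
    ring
  · rw [Finset.prod_insert h]
    have hc0 : m.count a = 0 :=
      Multiset.count_eq_zero_of_notMem (fun hmem => h (Multiset.mem_toFinset.mpr hmem))
    have hc : ∀ x ∈ m.toFinset, Multiset.count x (a ::ₘ m) = Multiset.count x m := by
      intro x hx
      exact Multiset.count_cons_of_ne (fun hxa => h (by rwa [hxa] at hx)) _
    rw [Finset.prod_congr rfl (fun x hx => by rw [hc x hx])]
    rw [Multiset.count_cons_self, hc0]
    norm_num
lemma zPart_pos {m : Multiset ℕ} (hm : 0 ∉ m) : 0 < zPart m := by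
  rw [zPart]
  refine Finset.prod_pos fun a ha => ?_
  have : 0 < a := Nat.pos_of_ne_zero (fun h => hm (h ▸ Multiset.mem_toFinset.mp ha))
  positivity

lemma zPart_ne_zero {m : Multiset ℕ} (hm : 0 ∉ m) : zPart m ≠ 0 := (zPart_pos hm).ne'

lemma ccSmul (c : ℚ) (p : Lambda) :
    constantCoeff (c • p) = c * constantCoeff p := by
  rw [MvPolynomial.smul_eq_C_mul, map_mul, constantCoeff_C]

lemma key1 (μ ν : Multiset ℕ) (hμ : 0 ∉ μ) (hν : 0 ∉ ν) :
    constantCoeff (betaPos μ ((ν.map Xn).prod)) = if μ = ν then zPart ν else 0 := by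
  classical
  induction μ using Multiset.induction_on generalizing ν with
  | empty =>
      rw [betaPos_zero]
      rcases Multiset.empty_or_exists_mem ν with rfl | ⟨b, hb⟩
      · simp [zPart_zero]
      · have hb0 : 0 < b := Nat.pos_of_ne_zero (fun h => hν (h ▸ hb))
        have : ν ≠ 0 := fun h => by simp [h] at hb
        rw [if_neg (fun h : (0 : Multiset ℕ) = ν => this h.symm)]
        rw [Module.End.one_apply, map_multiset_prod, Multiset.map_map]
        refine Multiset.prod_eq_zero ?_
        refine Multiset.mem_map.mpr ⟨b, hb, ?_⟩
        show constantCoeff (Xn b) = 0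
        simp [Xn, hb0]
  | cons a μ ih =>
      have ha : 0 < a := Nat.pos_of_ne_zero (fun h => hμ (h ▸ Multiset.mem_cons_self a μ))
      rw [betaPos_cons', Module.End.mul_apply]
      have harg : beta (a : ℤ) ((ν.map Xn).prod) =
          ((a : ℚ) * (ν.count a : ℚ)) • (((ν.erase a).map Xn).prod) := by
        rw [beta_of_pos (by exact_mod_cast ha : (0:ℤ) < (a:ℤ))]
        show (((a:ℤ):ℚ) • (pderiv (Nat.toPNat a ha)).toLinearMap) ((ν.map Xn).prod) = _
        rw [LinearMap.smul_apply]
        show ((a:ℤ):ℚ) • (pderiv (Nat.toPNat a ha) ((ν.map Xn).prod)) = _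
        rw [pderiv_prod_Xn ha ν, ← Nat.cast_smul_eq_nsmul ℚ, smul_smul]
        norm_cast
      rw [harg, map_smul, ccSmul,
        ih (ν.erase a) (fun h => hμ (Multiset.mem_cons_of_mem h))
          (fun h => hν (Multiset.mem_of_mem_erase h))]
      rcases Decidable.em (a ∈ ν) with hmem | hmem
      · rcases eq_or_ne μ (ν.erase a) with rfl | hne
        · rw [if_pos rfl, if_pos (Multiset.cons_erase hmem)]
          conv_rhs => rw [← Multiset.cons_erase hmem, zPart_cons]
          rw [← Multiset.cons_erase hmem, Multiset.count_cons_self]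
          push_cast
          rw [Multiset.erase_cons_head]
        · rw [if_neg hne, if_neg, mul_zero]
          intro h
          exact hne (by rw [← h, Multiset.erase_cons_head])
      · rw [Multiset.count_eq_zero_of_notMem hmem,
          if_neg (fun h : a ::ₘ μ = ν => hmem (h ▸ Multiset.mem_cons_self a μ))]
        simp

lemma vev_eq (μ ν : Multiset ℕ) (hμ : 0 ∉ μ) (hν : 0 ∉ ν) :
    vev (betaPos μ * betaNeg ν) = if μ = ν then zPart ν else 0 := by
  rw [vev, Module.End.mul_apply, betaNeg_apply_one, key1 μ ν hμ hν]

/-! ### Chunk 3: partition sums -/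

noncomputable def MS (N : ℕ) : Finset (Multiset ℕ) :=
  Finset.univ.image (fun μ : Nat.Partition N => μ.parts)

lemma mem_MS {N : ℕ} {m : Multiset ℕ} : m ∈ MS N ↔ m.sum = N ∧ 0 ∉ m := by
  constructor
  · rintro hm
    obtain ⟨μ, -, rfl⟩ := Finset.mem_image.mp hm
    exact ⟨μ.parts_sum, fun h => (lt_irrefl 0 (μ.parts_pos h)).elim⟩
  · rintro ⟨h1, h2⟩
    exact Finset.mem_image.mpr
      ⟨⟨m, fun {i} hi => Nat.pos_of_ne_zero (fun e => h2 (e ▸ hi)), h1⟩, Finset.mem_univ _, rfl⟩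

lemma sumPart (N : ℕ) (F : Multiset ℕ → ℚ) :
    ∑ μ : Nat.Partition N, F μ.parts = ∑ m ∈ MS N, F m :=
  (Finset.sum_image (fun _ _ _ _ h => Nat.Partition.ext h)).symm

noncomputable def partSum (g : ℕ → ℚ) (N : ℕ) : ℚ :=
  ∑ m ∈ MS N, (m.map g).prod / zPart m

lemma MS_zero : MS 0 = {0} := by
  ext m
  simp only [mem_MS, Finset.mem_singleton]
  constructor
  · rintro ⟨h1, h2⟩
    rw [Multiset.eq_zero_iff_forall_notMem]
    intro x hx
    have hle := Multiset.le_sum_of_mem hx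
    have : x = 0 := by omega
    exact h2 (this ▸ hx)
  · rintro rfl; simp

lemma partSum_zero (g : ℕ → ℚ) : partSum g 0 = 1 := by
  rw [partSum, MS_zero]
  simp [zPart_zero]

lemma recP (g : ℕ → ℚ) (N : ℕ) :
    ((N + 1 : ℕ) : ℚ) * partSum g (N + 1) =
      ∑ p ∈ Finset.HasAntidiagonal.antidiagonal (N + 1), (if p.1 = 0 then 0 else g p.1) * partSum g p.2 := by
  classical
  have hRHS : ∑ p ∈ Finset.HasAntidiagonal.antidiagonal (N + 1), (if p.1 = 0 then 0 else g p.1) * partSum g p.2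
      = ∑ x ∈ ((Finset.range (N + 2)).filter (· ≠ 0)).sigma (fun k => MS (N + 1 - k)),
          g x.1 * ((x.2.map g).prod / zPart x.2) := by
    rw [Finset.Nat.sum_antidiagonal_eq_sum_range_succ_mk, Finset.sum_sigma, Finset.sum_filter]
    refine Finset.sum_congr rfl fun k _ => ?_
    rcases eq_or_ne k 0 with rfl | hk
    · simp
    · rw [if_neg hk, if_pos hk, partSum, Finset.mul_sum]
  have hLHS : ((N + 1 : ℕ) : ℚ) * partSum g (N + 1)
      = ∑ x ∈ (MS (N + 1)).sigma (fun m => m.toFinset),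
          g x.2 * (((x.1.erase x.2).map g).prod / zPart (x.1.erase x.2)) := by
    rw [partSum, Finset.mul_sum, Finset.sum_sigma]
    refine Finset.sum_congr rfl fun m hm => ?_
    obtain ⟨hsum, hpos⟩ := mem_MS.mp hm
    have cast1 : ((N + 1 : ℕ) : ℚ) = ∑ k ∈ m.toFinset, ((m.count k : ℚ) * (k : ℚ)) := by
      rw [← hsum, Finset.sum_multiset_count m]
      push_cast [smul_eq_mul]
      rfl
    rw [cast1, Finset.sum_mul]
    refine Finset.sum_congr rfl fun k hk => ?_
    have hkm : k ∈ m := Multiset.mem_toFinset.mp hk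
    have hk0 : k ≠ 0 := fun e => hpos (e ▸ hkm)
    have hme : m = k ::ₘ m.erase k := (Multiset.cons_erase hkm).symm
    have hprod : (m.map g).prod = g k * ((m.erase k).map g).prod := by
      conv_lhs => rw [hme]
      rw [Multiset.map_cons, Multiset.prod_cons]
    have hz : zPart m = ((k : ℚ) * ((m.erase k).count k + 1)) * zPart (m.erase k) := by
      conv_lhs => rw [hme]
      exact zPart_cons k (m.erase k)
    have hcount : m.count k = (m.erase k).count k + 1 := by
      conv_lhs => rw [hme]
      rw [Multiset.count_cons_self]
    have hzne : zPart (m.erase k) ≠ 0 :=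
      zPart_ne_zero (fun h => hpos (Multiset.mem_of_mem_erase h))
    rw [hprod, hz, hcount]
    have hkQ : (k : ℚ) ≠ 0 := Nat.cast_ne_zero.mpr hk0
    have hcQ : ((m.erase k).count k + 1 : ℚ) ≠ 0 := by positivity
    field_simp
    push_cast
    ring
  rw [hLHS, hRHS]
  refine Finset.sum_nbij' (fun x => ⟨x.2, x.1.erase x.2⟩) (fun y => ⟨y.1 ::ₘ y.2, y.1⟩)
    ?_ ?_ ?_ ?_ ?_
  · rintro ⟨m, k⟩ hx
    dsimp only
    obtain ⟨hm, hk⟩ := Finset.mem_sigma.mp hx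
    obtain ⟨hsum, hpos⟩ := mem_MS.mp hm
    have hkm : k ∈ m := Multiset.mem_toFinset.mp hk
    have hk0 : k ≠ 0 := fun e => hpos (e ▸ hkm)
    have hkle : k ≤ N + 1 := hsum ▸ Multiset.le_sum_of_mem hkm
    refine Finset.mem_sigma.mpr ⟨Finset.mem_filter.mpr
      ⟨Finset.mem_range.mpr (show k < N + 2 by omega), hk0⟩, ?_⟩
    refine mem_MS.mpr ⟨?_, fun h => hpos (Multiset.mem_of_mem_erase h)⟩
    show (m.erase k).sum = N + 1 - k
    have : k + (m.erase k).sum = m.sum := by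
      conv_rhs => rw [← Multiset.cons_erase hkm]
      rw [Multiset.sum_cons]
    rw [hsum] at this
    omega
  · rintro ⟨k, m'⟩ hy
    dsimp only
    obtain ⟨hk, hm'⟩ := Finset.mem_sigma.mp hy
    obtain ⟨hkr, hk0⟩ := Finset.mem_filter.mp hk
    have hkle : k < N + 2 := Finset.mem_range.mp hkr
    obtain ⟨hsum, hpos⟩ := mem_MS.mp hm'
    have hsum' : m'.sum = N + 1 - k := hsum
    refine Finset.mem_sigma.mpr ⟨mem_MS.mpr ⟨?_, ?_⟩, ?_⟩
    · show (k ::ₘ m').sum = N + 1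
      rw [Multiset.sum_cons, hsum']; omega
    · intro h
      rcases Multiset.mem_cons.mp h with h | h
      · exact hk0 h.symm
      · exact hpos h
    · exact Multiset.mem_toFinset.mpr (Multiset.mem_cons_self _ _)
  · rintro ⟨m, k⟩ hx
    obtain ⟨hm, hk⟩ := Finset.mem_sigma.mp hx
    have hkm : k ∈ m := Multiset.mem_toFinset.mp hk
    simp [Multiset.cons_erase hkm]
  · rintro ⟨k, m'⟩ _
    simp
  · rintro ⟨m, k⟩ _
    rfl

/-! ### Chunk 4: recursion for fexp coefficients -/

section ExpRec

variable (g : ℕ → ℚ)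

noncomputable def fS : PowerSeries ℚ :=
  PowerSeries.mk fun n => if n = 0 then 0 else g n / n

noncomputable def gS : PowerSeries ℚ :=
  PowerSeries.mk fun n => if n = 0 then 0 else g n

lemma n_mul_coeff_fS (n : ℕ) :
    (n : ℚ) * PowerSeries.coeff n (fS g) = (if n = 0 then 0 else g n) := by
  rw [fS, PowerSeries.coeff_mk]
  rcases eq_or_ne n 0 with rfl | hn
  · simp
  · rw [if_neg hn, if_neg hn]
    field_simp

lemma coeff_fS_pow_eq_zero : ∀ m N : ℕ, N < m → PowerSeries.coeff N ((fS g) ^ m) = 0 := by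
  intro m
  induction m with
  | zero => omega
  | succ m ih =>
      intro N hN
      rw [pow_succ', PowerSeries.coeff_mul]
      refine Finset.sum_eq_zero fun p hp => ?_
      have hpp : p.1 + p.2 = N := Finset.HasAntidiagonal.mem_antidiagonal.mp hp
      rcases eq_or_ne p.1 0 with h1 | h1
      · rw [fS, PowerSeries.coeff_mk, h1, if_pos rfl, zero_mul]
      · rw [ih p.2 (by omega), mul_zero]

lemma claimC : ∀ m N : ℕ, (N : ℚ) * PowerSeries.coeff N ((fS g) ^ (m + 1)) =
    ((m : ℚ) + 1) * PowerSeries.coeff N (gS g * (fS g) ^ m) := by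
  intro m
  induction m with
  | zero =>
      intro N
      rw [pow_one, pow_zero, mul_one, n_mul_coeff_fS, gS, PowerSeries.coeff_mk]
      norm_num
  | succ m ih =>
      intro N
      have h1 : (fS g) ^ (m + 2) = fS g * (fS g) ^ (m + 1) := by ring
      rw [h1, PowerSeries.coeff_mul, Finset.mul_sum]
      have hterm : ∀ p ∈ Finset.HasAntidiagonal.antidiagonal N,
          (N : ℚ) * (PowerSeries.coeff p.1 (fS g) * PowerSeries.coeff p.2 ((fS g) ^ (m + 1)))
          = (if p.1 = 0 then 0 else g p.1) * PowerSeries.coeff p.2 ((fS g) ^ (m + 1))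
            + PowerSeries.coeff p.1 (fS g) *
              (((m : ℚ) + 1) * PowerSeries.coeff p.2 (gS g * (fS g) ^ m)) := by
        intro p hp
        have hpp : p.1 + p.2 = N := Finset.HasAntidiagonal.mem_antidiagonal.mp hp
        have hN : (N : ℚ) = (p.1 : ℚ) + (p.2 : ℚ) := by exact_mod_cast hpp.symm
        rw [hN, add_mul, ← ih p.2, ← mul_assoc, mul_comm ((p.1 : ℚ)) _,
          mul_comm ((p.2 : ℚ)) _, mul_assoc, mul_assoc, ← n_mul_coeff_fS g p.1]
        ring
      rw [Finset.sum_congr rfl hterm, Finset.sum_add_distrib]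
      have hA : ∑ p ∈ Finset.HasAntidiagonal.antidiagonal N,
          (if p.1 = 0 then 0 else g p.1) * PowerSeries.coeff p.2 ((fS g) ^ (m + 1))
          = PowerSeries.coeff N (gS g * (fS g) ^ (m + 1)) := by
        rw [PowerSeries.coeff_mul]
        exact Finset.sum_congr rfl fun p _ => by rw [gS, PowerSeries.coeff_mk]
      have hB : ∑ p ∈ Finset.HasAntidiagonal.antidiagonal N,
          PowerSeries.coeff p.1 (fS g) *
            (((m : ℚ) + 1) * PowerSeries.coeff p.2 (gS g * (fS g) ^ m))
          = ((m : ℚ) + 1) * PowerSeries.coeff N (gS g * (fS g) ^ (m + 1)) := by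
        have h2 : gS g * (fS g) ^ (m + 1) = fS g * (gS g * (fS g) ^ m) := by ring
        rw [h2, PowerSeries.coeff_mul, Finset.mul_sum]
        exact Finset.sum_congr rfl fun p _ => by ring
      rw [hA, hB]
      push_cast
      ring

lemma recE (N : ℕ) :
    ((N + 1 : ℕ) : ℚ) * PowerSeries.coeff (N + 1) (fexp (fS g)) =
      ∑ p ∈ Finset.HasAntidiagonal.antidiagonal (N + 1),
        (if p.1 = 0 then 0 else g p.1) * PowerSeries.coeff p.2 (fexp (fS g)) := by
  simp only [fexp, PowerSeries.coeff_mk]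
  rw [Finset.mul_sum, Finset.sum_range_succ']
  have h0 : ((N + 1 : ℕ) : ℚ) * (PowerSeries.coeff (N + 1) ((fS g) ^ 0) / Nat.factorial 0) = 0 := by
    rw [pow_zero, PowerSeries.coeff_one, if_neg (by omega)]
    simp
  rw [h0, add_zero]
  have hterm : ∀ i ∈ Finset.range (N + 1),
      ((N + 1 : ℕ) : ℚ) * (PowerSeries.coeff (N + 1) ((fS g) ^ (i + 1)) / Nat.factorial (i + 1))
      = ∑ p ∈ Finset.HasAntidiagonal.antidiagonal (N + 1),
          (if p.1 = 0 then 0 else g p.1) * (PowerSeries.coeff p.2 ((fS g) ^ i) / Nat.factorial i) := by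
    intro i _
    have hc := claimC g i (N + 1)
    have hfac : (Nat.factorial (i + 1) : ℚ) = ((i : ℚ) + 1) * Nat.factorial i := by
      rw [Nat.factorial_succ]; push_cast; ring
    have hfne : (Nat.factorial i : ℚ) ≠ 0 := Nat.cast_ne_zero.mpr (Nat.factorial_ne_zero i)
    have hine : ((i : ℚ) + 1) ≠ 0 := by positivity
    rw [← mul_div_assoc, hc, hfac, mul_div_mul_left _ _ hine,
      PowerSeries.coeff_mul, Finset.sum_div]
    refine Finset.sum_congr rfl fun p _ => ?_
    rw [gS, PowerSeries.coeff_mk, mul_div_assoc]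
  rw [Finset.sum_congr rfl hterm, Finset.sum_comm]
  refine Finset.sum_congr rfl fun p hp => ?_
  have hpp : p.1 + p.2 = N + 1 := Finset.HasAntidiagonal.mem_antidiagonal.mp hp
  rcases eq_or_ne p.1 0 with h1 | h1
  · simp [h1]
  · rw [← Finset.mul_sum]
    congr 1
    refine (Finset.sum_subset ?_ ?_).symm
    · intro x hx
      rw [Finset.mem_range] at *
      omega
    · intro x _ hx
      rw [Finset.mem_range] at hx
      rw [coeff_fS_pow_eq_zero g x p.2 (by omega), zero_div]

lemma E_eq_P : ∀ N, PowerSeries.coeff N (fexp (fS g)) = partSum g N := by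
  intro N
  induction N using Nat.strong_induction_on with
  | _ N ih =>
      match N with
      | 0 =>
          rw [partSum_zero]
          simp only [fexp, PowerSeries.coeff_mk]
          simp
      | (M + 1) =>
          have h1 := recE g M
          have h2 := recP g M
          have heq : ∑ p ∈ Finset.HasAntidiagonal.antidiagonal (M + 1),
              (if p.1 = 0 then 0 else g p.1) * PowerSeries.coeff p.2 (fexp (fS g))
              = ∑ p ∈ Finset.HasAntidiagonal.antidiagonal (M + 1),
              (if p.1 = 0 then 0 else g p.1) * partSum g p.2 := by
            refine Finset.sum_congr rfl fun p hp => ?_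
            have hpp : p.1 + p.2 = M + 1 := Finset.HasAntidiagonal.mem_antidiagonal.mp hp
            rcases eq_or_ne p.1 0 with h | h
            · simp [h]
            · rw [ih p.2 (by omega)]
          have hne : ((M + 1 : ℕ) : ℚ) ≠ 0 := by positivity
          apply mul_left_cancel₀ hne
          rw [h1, h2, heq]

end ExpRec

/-! ### Chunk 5: doubling -/

lemma sum_map_double (m : Multiset ℕ) : (m.map (fun x => 2 * x)).sum = 2 * m.sum := by
  induction m using Multiset.induction_on with
  | empty => simp
  | cons a m ih => simp [ih]; ring

lemma halfsum (m : Multiset ℕ) (h : ∀ x ∈ m, Even x) :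
    2 * (m.map (fun x => x / 2)).sum = m.sum := by
  induction m using Multiset.induction_on with
  | empty => simp
  | cons a m ih =>
      obtain ⟨c, rfl⟩ := h a (Multiset.mem_cons_self a m)
      rw [Multiset.map_cons, Multiset.sum_cons, Multiset.sum_cons, mul_add,
        ih (fun x hx => h x (Multiset.mem_cons_of_mem hx))]
      omega

lemma prod_map_two_mul (h : ℕ → ℚ) (m : Multiset ℕ) :
    (m.map (fun x => 2 * h x)).prod = 2 ^ (Multiset.card m) * (m.map h).prod := by
  induction m using Multiset.induction_on with
  | empty => simp
  | cons a m ih =>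
      rw [Multiset.map_cons, Multiset.prod_cons, ih, Multiset.map_cons, Multiset.prod_cons,
        Multiset.card_cons, pow_succ]
      ring

lemma zPart_double (m : Multiset ℕ) :
    zPart (m.map (fun x => 2 * x)) = 2 ^ (Multiset.card m) * zPart m := by
  classical
  induction m using Multiset.induction_on with
  | empty => simp [zPart_zero]
  | cons a m ih =>
      rw [Multiset.map_cons, zPart_cons, ih, zPart_cons, Multiset.card_cons, pow_succ,
        Multiset.count_map_eq_count' _ _ (fun x y hxy => by omega) a]
      push_cast
      ring

lemma partSum_even (h : ℕ → ℚ) (N : ℕ) :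
    partSum (fun n => if Even n then 2 * h (n / 2) else 0) N =
      if Even N then partSum h (N / 2) else 0 := by
  classical
  set G : ℕ → ℚ := fun n => if Even n then 2 * h (n / 2) else 0 with hG
  have hfilter : partSum G N =
      ∑ m ∈ (MS N).filter (fun m => ∀ x ∈ m, Even x), (m.map G).prod / zPart m := by
    rw [partSum]
    refine (Finset.sum_filter_of_ne ?_).symm
    intro m _ hne
    by_contra hodd
    push_neg at hodd
    obtain ⟨x, hx, hxodd⟩ := hodd
    refine hne ?_
    rw [show (m.map G).prod = 0 from Multiset.prod_eq_zero
      (Multiset.mem_map.mpr ⟨x, hx, by rw [hG]; simp [hxodd]⟩), zero_div]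
  rcases Decidable.em (Even N) with hev | hev
  · rw [hfilter, if_pos hev]
    have hNK : N = 2 * (N / 2) := by
      obtain ⟨c, rfl⟩ := hev; omega
    rw [partSum]
    refine Finset.sum_nbij' (fun m => m.map (fun x => x / 2)) (fun m' => m'.map (fun x => 2 * x))
      ?_ ?_ ?_ ?_ ?_
    · intro m hm
      obtain ⟨hm1, hev1⟩ := Finset.mem_filter.mp hm
      obtain ⟨hsum, hpos⟩ := mem_MS.mp hm1
      refine mem_MS.mpr ⟨?_, ?_⟩
      · have := halfsum m hev1
        omega
      · intro h0
        obtain ⟨x, hx, hx0⟩ := Multiset.mem_map.mp h0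
        obtain ⟨c, rfl⟩ := hev1 x hx
        have : c + c ≠ 0 := fun e => hpos (e ▸ hx)
        omega
    · intro m' hm'
      obtain ⟨hsum, hpos⟩ := mem_MS.mp hm'
      refine Finset.mem_filter.mpr ⟨mem_MS.mpr ⟨?_, ?_⟩, ?_⟩
      · rw [sum_map_double, hsum]; omega
      · intro h0
        obtain ⟨x, hx, hx0⟩ := Multiset.mem_map.mp h0
        have hx00 : x = 0 := by omega
        exact hpos (hx00 ▸ hx)
      · intro x hx
        obtain ⟨y, hy, rfl⟩ := Multiset.mem_map.mp hx
        exact ⟨y, by ring⟩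
    · intro m hm
      obtain ⟨hm1, hev1⟩ := Finset.mem_filter.mp hm
      rw [Multiset.map_map]
      refine Eq.trans (Multiset.map_congr rfl fun x hx => ?_) (Multiset.map_id m)
      obtain ⟨c, rfl⟩ := hev1 x hx
      show 2 * ((c + c) / 2) = c + c
      omega
    · intro m' hm'
      rw [Multiset.map_map]
      refine Eq.trans (Multiset.map_congr rfl fun x _ => ?_) (Multiset.map_id m')
      show 2 * x / 2 = x
      omega
    · intro m hm
      obtain ⟨hm1, hev1⟩ := Finset.mem_filter.mp hm
      have hmm : m = (m.map (fun x => x / 2)).map (fun x => 2 * x) := by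
        rw [Multiset.map_map]
        refine (Eq.trans (Multiset.map_congr rfl fun x hx => ?_) (Multiset.map_id m)).symm
        obtain ⟨c, rfl⟩ := hev1 x hx
        show 2 * ((c + c) / 2) = c + c
        omega
      conv_lhs => rw [hmm]
      rw [Multiset.map_map, zPart_double]
      have hGcomp : ((m.map (fun x => x / 2)).map (G ∘ fun x => 2 * x)).prod
          = ((m.map (fun x => x / 2)).map (fun x => 2 * h x)).prod := by
        refine congrArg Multiset.prod (Multiset.map_congr rfl fun x _ => ?_)
        show (if Even (2 * x) then 2 * h (2 * x / 2) else 0) = 2 * h x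
        rw [if_pos (even_two_mul x), Nat.mul_div_cancel_left x two_pos]
      rw [hGcomp, prod_map_two_mul]
      rw [mul_div_mul_left]
      positivity
  · rw [hfilter, if_neg hev]
    refine Finset.sum_eq_zero fun m hm => ?_
    obtain ⟨hm1, hev1⟩ := Finset.mem_filter.mp hm
    obtain ⟨hsum, -⟩ := mem_MS.mp hm1
    exfalso
    refine hev ?_
    rw [← hsum, ← halfsum m hev1]
    exact ⟨_, two_mul _⟩

/-! ### Chunk 6: assembly -/

lemma partition_parts_pos {i : ℕ} (μ : Nat.Partition i) : 0 ∉ μ.parts :=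
  fun h => lt_irrefl 0 (μ.parts_pos h)

lemma inner_offdiag (ap am : ℕ → ℚ) (i j : ℕ) (hij : i ≠ j) :
    ∑ μ : Nat.Partition i, ∑ ν : Nat.Partition j,
      (μ.parts.map ap).prod * (ν.parts.map am).prod *
        vev (betaPos μ.parts * betaNeg ν.parts) / (zPart μ.parts * zPart ν.parts) = 0 := by
  refine Finset.sum_eq_zero fun μ _ => Finset.sum_eq_zero fun ν _ => ?_
  rw [vev_eq _ _ (partition_parts_pos μ) (partition_parts_pos ν),
    if_neg (fun h => hij (by rw [← μ.parts_sum, ← ν.parts_sum, h]))]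
  simp

lemma inner_diag (ap am : ℕ → ℚ) (i : ℕ) :
    ∑ μ : Nat.Partition i, ∑ ν : Nat.Partition i,
      (μ.parts.map ap).prod * (ν.parts.map am).prod *
        vev (betaPos μ.parts * betaNeg ν.parts) / (zPart μ.parts * zPart ν.parts)
    = partSum (fun k => ap k * am k) i := by
  have hstep : ∀ μ : Nat.Partition i,
      (∑ ν : Nat.Partition i,
        (μ.parts.map ap).prod * (ν.parts.map am).prod *
          vev (betaPos μ.parts * betaNeg ν.parts) / (zPart μ.parts * zPart ν.parts))
      = (μ.parts.map ap).prod * (μ.parts.map am).prod / zPart μ.parts := by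
    intro μ
    rw [Finset.sum_eq_single μ]
    · rw [vev_eq _ _ (partition_parts_pos μ) (partition_parts_pos μ), if_pos rfl]
      have hz : zPart μ.parts ≠ 0 := zPart_ne_zero (partition_parts_pos μ)
      field_simp
    · intro ν _ hνμ
      rw [vev_eq _ _ (partition_parts_pos μ) (partition_parts_pos ν),
        if_neg (fun h => hνμ (Nat.Partition.ext h.symm))]
      simp
    · intro hμ
      exact absurd (Finset.mem_univ μ) hμ
  rw [Finset.sum_congr rfl (fun μ _ => hstep μ), partSum, sumPart i
    (fun m => (m.map ap).prod * (m.map am).prod / zPart m)]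
  refine Finset.sum_congr rfl fun m _ => ?_
  rw [Multiset.prod_map_mul]

/-- `⟨exp(∑_{n≥1} (a_n t^n/n) β_n) exp(∑_{n≥1} (a_{−n} t^n/n) β_{−n})⟩
  = exp(∑_{n≥1} (a_n a_{−n}/n) t^{2n})` as formal power series in `t`:
the left-hand side is expanded as
`∑_{(μ,ν)} (∏_i a_{μ_i})(∏_j a_{−ν_j}) ⟨β_μ β_{−ν}⟩ t^{|μ|+|ν|}/(z_μ z_ν)`,
the sum being over all pairs of partitions. Here `ap n` stands for `a_n` and
`am n` for `a_{−n}`. -/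
theorem vev_exp_exp (ap am : ℕ → ℚ) :
    (PowerSeries.mk fun N =>
        ∑ p ∈ Finset.HasAntidiagonal.antidiagonal N, ∑ μ : Nat.Partition p.1, ∑ ν : Nat.Partition p.2,
          (μ.parts.map ap).prod * (ν.parts.map am).prod *
            vev (betaPos μ.parts * betaNeg ν.parts) / (zPart μ.parts * zPart ν.parts)) =
      fexp (PowerSeries.mk fun N =>
        if N ≠ 0 ∧ Even N then ap (N / 2) * am (N / 2) * ((N : ℚ) / 2)⁻¹ else 0) := by
  classical
  set h : ℕ → ℚ := fun k => ap k * am k with hh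
  set g : ℕ → ℚ := fun n => if Even n then 2 * h (n / 2) else 0 with hgdef
  have hfs : (PowerSeries.mk fun n =>
      if n ≠ 0 ∧ Even n then ap (n / 2) * am (n / 2) * ((n : ℚ) / 2)⁻¹ else 0) = fS g := by
    refine PowerSeries.ext fun n => ?_
    rw [PowerSeries.coeff_mk, fS, PowerSeries.coeff_mk]
    rcases eq_or_ne n 0 with rfl | hn
    · norm_num
    · rw [if_neg hn, hgdef]
      rcases Decidable.em (Even n) with he | he
      · rw [if_pos ⟨hn, he⟩]
        show ap (n / 2) * am (n / 2) * ((n : ℚ) / 2)⁻¹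
          = (if Even n then 2 * h (n / 2) else 0) / n
        rw [if_pos he, hh]
        have hnne : (n : ℚ) ≠ 0 := Nat.cast_ne_zero.mpr hn
        rw [inv_div]
        ring
      · rw [if_neg (fun hc => he hc.2)]
        show (0 : ℚ) = (if Even n then 2 * h (n / 2) else 0) / n
        rw [if_neg he, zero_div]
  rw [hfs]
  refine PowerSeries.ext fun N => ?_
  rw [PowerSeries.coeff_mk, E_eq_P g N, hgdef, partSum_even h N]
  rcases Decidable.em (Even N) with hev | hev
  · rw [if_pos hev]
    obtain ⟨c, hc⟩ := hev
    have hmem : ((N / 2 : ℕ), (N / 2 : ℕ)) ∈ Finset.HasAntidiagonal.antidiagonal N :=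
      Finset.HasAntidiagonal.mem_antidiagonal.mpr (by omega)
    rw [Finset.sum_eq_single_of_mem _ hmem]
    · exact inner_diag ap am (N / 2)
    · intro p hp hpne
      have hpp : p.1 + p.2 = N := Finset.HasAntidiagonal.mem_antidiagonal.mp hp
      refine inner_offdiag ap am p.1 p.2 ?_
      intro he
      have h1 : p.1 = N / 2 := by omega
      have h2 : p.2 = N / 2 := by omega
      exact hpne (Prod.ext h1 h2)
  · rw [if_neg hev]
    refine Finset.sum_eq_zero fun p hp => ?_
    have hpp : p.1 + p.2 = N := Finset.HasAntidiagonal.mem_antidiagonal.mp hp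
    refine inner_offdiag ap am p.1 p.2 ?_
    intro he
    exact hev ⟨p.1, by omega⟩
end

section
/- For any function c : {1, 2, 3, …} → ℚ, the following identity of formal power series in t over ℚ holds: exp(∑_{n≥1} c_n t^n / n) = ∑_μ (∏_i c_{μ_i}) · t^{|μ|} / z_μ, where the sum on the right is over all partitions μ (including the empty partition, which contributes 1). -/
open PowerSeries Finset


noncomputable def myF (c : ℕ → ℚ) : PowerSeries ℚ :=
  PowerSeries.mk fun n => if n = 0 then 0 else c n / n

noncomputable def myA (c : ℕ → ℚ) (N : ℕ) : ℚ :=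
  ∑ m ∈ Finset.range (N + 1), (PowerSeries.coeff N ((myF c) ^ m)) / m.factorial

lemma constantCoeff_myF (c : ℕ → ℚ) : constantCoeff (myF c) = 0 := by
  simp [myF, ← coeff_zero_eq_constantCoeff]

lemma coeff_myF_pow_eq_zero (c : ℕ → ℚ) {n m : ℕ} (h : n < m) :
    coeff n ((myF c) ^ m) = 0 := by
  have hdvd : (X : PowerSeries ℚ) ^ m ∣ (myF c) ^ m :=
    pow_dvd_pow_of_dvd (X_dvd_iff.2 (constantCoeff_myF c)) m
  exact (X_pow_dvd_iff.mp hdvd) n h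

lemma coeff_deriv_myF (c : ℕ → ℚ) (k : ℕ) :
    coeff k (PowerSeries.derivative ℚ (myF c)) = c (k + 1) := by
  rw [coeff_derivative]
  simp only [myF, coeff_mk, Nat.succ_ne_zero, if_false]
  have : ((k : ℚ) + 1) ≠ 0 := by positivity
  push_cast
  field_simp

lemma myA_zero (c : ℕ → ℚ) : myA c 0 = 1 := by
  simp [myA]

lemma myA_rec (c : ℕ → ℚ) (N : ℕ) :
    (N + 1 : ℚ) * myA c (N + 1) = ∑ k ∈ range (N + 1), c (k + 1) * myA c (N - k) := by
  have key : ∀ m : ℕ, (N + 1 : ℚ) * coeff (N + 1) ((myF c) ^ m)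
      = m * coeff N ((myF c) ^ (m - 1) * PowerSeries.derivative ℚ (myF c)) := by
    intro m
    have h1 : coeff N (PowerSeries.derivative ℚ ((myF c) ^ m))
        = coeff (N + 1) ((myF c) ^ m) * (N + 1) := coeff_derivative _ _
    have h2 : PowerSeries.derivative ℚ ((myF c) ^ m)
        = m • ((myF c) ^ (m - 1) * PowerSeries.derivative ℚ (myF c)) := by
      rw [Derivation.leibniz_pow, smul_eq_mul]
    rw [h2] at h1
    rw [map_nsmul] at h1
    rw [nsmul_eq_mul] at h1
    linarith [h1]
  have step1 : (N + 1 : ℚ) * myA c (N + 1)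
      = ∑ m ∈ range (N + 2), (m : ℚ) * coeff N ((myF c) ^ (m - 1)
          * PowerSeries.derivative ℚ (myF c)) / m.factorial := by
    rw [myA, Finset.mul_sum]
    exact Finset.sum_congr rfl fun m _ => by
      rw [← mul_div_assoc, key m, mul_div_assoc]
  rw [step1, Finset.sum_range_succ']
  simp only [Nat.cast_zero, zero_mul, zero_div, add_zero, Nat.add_sub_cancel]
  have step2 : ∀ j : ℕ, ((j : ℚ) + 1) * coeff N ((myF c) ^ j
        * PowerSeries.derivative ℚ (myF c)) / (j + 1).factorial
      = coeff N ((myF c) ^ j * PowerSeries.derivative ℚ (myF c)) / j.factorial := by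
    intro j
    have hj : ((j : ℚ) + 1) ≠ 0 := by positivity
    have hf : ((j.factorial : ℚ)) ≠ 0 := by exact_mod_cast j.factorial_ne_zero
    rw [Nat.factorial_succ]
    push_cast
    field_simp
  have step3 : ∀ j : ℕ, coeff N ((myF c) ^ j * PowerSeries.derivative ℚ (myF c))
      = ∑ k ∈ range (N + 1), c (k + 1) * coeff (N - k) ((myF c) ^ j) := by
    intro j
    rw [mul_comm, coeff_mul, Finset.Nat.sum_antidiagonal_eq_sum_range_succ_mk]
    exact Finset.sum_congr rfl fun k _ => by rw [coeff_deriv_myF]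
  calc ∑ j ∈ range (N + 1), (((j + 1 : ℕ)) : ℚ) * coeff N ((myF c) ^ j
          * PowerSeries.derivative ℚ (myF c)) / (((j + 1).factorial : ℕ) : ℚ)
      = ∑ j ∈ range (N + 1), (∑ k ∈ range (N + 1),
          c (k + 1) * coeff (N - k) ((myF c) ^ j)) / j.factorial := by
        refine Finset.sum_congr rfl fun j _ => ?_
        rw [← step3]
        exact_mod_cast step2 j
    _ = ∑ k ∈ range (N + 1), c (k + 1)
          * ∑ j ∈ range (N + 1), coeff (N - k) ((myF c) ^ j) / j.factorial := by
        simp only [Finset.sum_div, Finset.mul_sum]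
        rw [Finset.sum_comm]
        exact Finset.sum_congr rfl fun k _ => Finset.sum_congr rfl fun j _ => by ring
    _ = ∑ k ∈ range (N + 1), c (k + 1) * myA c (N - k) := by
        refine Finset.sum_congr rfl fun k hk => ?_
        congr 1
        rw [myA]
        symm
        apply Finset.sum_subset
        · exact Finset.range_subset_range.2 (by
            have := Finset.mem_range.1 hk
            omega)
        · intro j _ hj
          rw [coeff_myF_pow_eq_zero c (by
            simp only [Finset.mem_range] at hj
            omega), zero_div]

noncomputable def myB (c : ℕ → ℚ) (N : ℕ) : ℚ :=
  ∑ μ : Nat.Partition N, (μ.parts.map c).prod / zPart μ.parts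

lemma myB_zero (c : ℕ → ℚ) : myB c 0 = 1 := by
  rw [myB]
  rw [show (Finset.univ : Finset (Nat.Partition 0)) = {Nat.Partition.indiscrete 0} from rfl]
  simp [Nat.Partition.indiscrete, zPart]

lemma zPart_ne_zero_s7 {μ : Multiset ℕ} (hpos : ∀ i ∈ μ, 0 < i) : zPart μ ≠ 0 := by
  rw [zPart]
  apply Finset.prod_ne_zero_iff.2
  intro a ha
  have ha' : 0 < a := hpos a (Multiset.mem_toFinset.1 ha)
  positivity

lemma zPart_erase {μ : Multiset ℕ} {a : ℕ} (ha : a ∈ μ) (hpos : 0 < a) :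
    zPart μ = ((a : ℚ) * μ.count a) * zPart (μ.erase a) := by
  classical
  have hak : 1 ≤ μ.count a := Multiset.one_le_count_iff_mem.2 ha
  have haf : a ∈ μ.toFinset := Multiset.mem_toFinset.2 ha
  set g : ℕ → ℚ := fun b => (b : ℚ) ^ ((μ.erase a).count b) * ((μ.erase a).count b).factorial
    with hg
  have h1 : zPart (μ.erase a) = ∏ b ∈ μ.toFinset, g b := by
    rw [zPart]
    apply Finset.prod_subset
    · exact Multiset.toFinset_subset.2 (Multiset.erase_subset a μ)
    · intro b _ hb
      have : (μ.erase a).count b = 0 := by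
        by_contra h
        exact hb (Multiset.mem_toFinset.2 (Multiset.count_pos.1 (Nat.pos_of_ne_zero h)))
      simp [hg, this]
  rw [h1, zPart, ← Finset.mul_prod_erase _ _ haf, ← Finset.mul_prod_erase _ g haf]
  have h2 : ∀ b ∈ μ.toFinset.erase a, (b : ℚ) ^ μ.count b * (μ.count b).factorial = g b := by
    intro b hb
    have hba : b ≠ a := Finset.ne_of_mem_erase hb
    rw [hg]
    simp [Multiset.count_erase_of_ne hba]
  rw [Finset.prod_congr rfl h2]
  have h3 : (a : ℚ) ^ μ.count a * (μ.count a).factorial = ((a : ℚ) * μ.count a) * g a := by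
    rw [hg]
    simp only [Multiset.count_erase_self]
    have hk : μ.count a = (μ.count a - 1) + 1 := by omega
    rw [hk, pow_succ, Nat.factorial_succ]
    push_cast [Nat.sub_add_cancel hak]
    ring
  rw [h3]
  ring

lemma weight_erase (c : ℕ → ℚ) {μ : Multiset ℕ} {a : ℕ} (ha : a ∈ μ)
    (hpos : ∀ i ∈ μ, 0 < i) :
    ((μ.count a : ℚ) * a) * ((μ.map c).prod / zPart μ)
      = c a * (((μ.erase a).map c).prod / zPart (μ.erase a)) := by
  have hmap : μ.map c = c a ::ₘ (μ.erase a).map c := by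
    conv_lhs => rw [← Multiset.cons_erase ha]
    rw [Multiset.map_cons]
  have hz := zPart_erase ha (hpos a ha)
  have hz2 : zPart (μ.erase a) ≠ 0 :=
    zPart_ne_zero_s7 fun i hi => hpos i (Multiset.mem_of_mem_erase hi)
  have hca : ((a : ℚ) * μ.count a) ≠ 0 := by
    have h1 : 0 < a := hpos a ha
    have h2 : 0 < μ.count a := Multiset.count_pos.2 ha
    positivity
  rw [hmap, Multiset.prod_cons, hz]
  have ha0 : (a : ℚ) ≠ 0 := left_ne_zero_of_mul hca
  have hc0 : (μ.count a : ℚ) ≠ 0 := right_ne_zero_of_mul hca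
  field_simp

def eraseP {n m : ℕ} (μ : Nat.Partition n) (a : ℕ) (ha : a ∈ μ.parts) (h : a + m = n) :
    Nat.Partition m where
  parts := μ.parts.erase a
  parts_pos := fun hi => μ.parts_pos (Multiset.mem_of_mem_erase hi)
  parts_sum := by
    have hs : a + (μ.parts.erase a).sum = n := by
      rw [← Multiset.sum_cons, Multiset.cons_erase ha, μ.parts_sum]
    omega

def consP {n m : ℕ} (k : ℕ) (hk : 0 < k) (ν : Nat.Partition m) (h : k + m = n) :
    Nat.Partition n where
  parts := k ::ₘ ν.parts
  parts_pos := fun hi => by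
    rcases Multiset.mem_cons.1 hi with h' | h'
    · omega
    · exact ν.parts_pos h'
  parts_sum := by rw [Multiset.sum_cons, ν.parts_sum, h]

lemma mem_of_sig {N : ℕ} (x : Σ μ : Nat.Partition (N + 1), ℕ)
    (hx : x ∈ (Finset.univ : Finset (Nat.Partition (N + 1))).sigma
      (fun μ => μ.parts.toFinset)) :
    x.2 ∈ x.1.parts := Multiset.mem_toFinset.1 (Finset.mem_sigma.1 hx).2

lemma sig_bounds {N : ℕ} (x : Σ μ : Nat.Partition (N + 1), ℕ)
    (hx : x ∈ (Finset.univ : Finset (Nat.Partition (N + 1))).sigma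
      (fun μ => μ.parts.toFinset)) : 0 < x.2 ∧ x.2 ≤ N + 1 := by
  have hmem := mem_of_sig x hx
  have h1 : 0 < x.2 := x.1.parts_pos hmem
  have hs : x.2 + (x.1.parts.erase x.2).sum = N + 1 := by
    rw [← Multiset.sum_cons, Multiset.cons_erase hmem, x.1.parts_sum]
  omega

lemma sig_sum {N : ℕ} (x : Σ μ : Nat.Partition (N + 1), ℕ)
    (hx : x ∈ (Finset.univ : Finset (Nat.Partition (N + 1))).sigma
      (fun μ => μ.parts.toFinset)) : x.2 + (N - (x.2 - 1)) = N + 1 := by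
  have := sig_bounds x hx
  omega

lemma myB_rec (c : ℕ → ℚ) (N : ℕ) :
    (N + 1 : ℚ) * myB c (N + 1) = ∑ k ∈ range (N + 1), c (k + 1) * myB c (N - k) := by
  classical
  have hsum : ∀ μ : Nat.Partition (N + 1),
      ((N : ℚ) + 1) = ∑ a ∈ μ.parts.toFinset, (μ.parts.count a : ℚ) * a := by
    intro μ
    have hN : μ.parts.sum = ∑ a ∈ μ.parts.toFinset, μ.parts.count a * a := by
      conv_lhs => rw [← Multiset.map_id μ.parts]
      rw [Finset.sum_multiset_map_count]
      simp [smul_eq_mul]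
    rw [μ.parts_sum] at hN
    have h2 : ((N + 1 : ℕ) : ℚ) = ((∑ a ∈ μ.parts.toFinset, μ.parts.count a * a : ℕ) : ℚ) := by
      exact_mod_cast congrArg (Nat.cast : ℕ → ℚ) hN
    push_cast at h2
    exact_mod_cast h2
  have step1 : (N + 1 : ℚ) * myB c (N + 1)
      = ∑ μ : Nat.Partition (N + 1), ∑ a ∈ μ.parts.toFinset,
          c a * (((μ.parts.erase a).map c).prod / zPart (μ.parts.erase a)) := by
    rw [myB, Finset.mul_sum]
    refine Finset.sum_congr rfl fun μ _ => ?_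
    rw [hsum μ, Finset.sum_mul]
    refine Finset.sum_congr rfl fun a ha => ?_
    exact weight_erase c (Multiset.mem_toFinset.1 ha) (fun i hi => μ.parts_pos hi)
  have step2 : ∑ y ∈ (Finset.range (N + 1)).sigma
        (fun k => (Finset.univ : Finset (Nat.Partition (N - k)))),
        c (y.1 + 1) * ((y.2.parts.map c).prod / zPart y.2.parts)
      = ∑ k ∈ range (N + 1), c (k + 1) * myB c (N - k) := by
    rw [Finset.sum_sigma]
    refine Finset.sum_congr rfl fun k _ => ?_
    rw [myB, Finset.mul_sum]
  rw [step1, Finset.sum_sigma']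
  refine Eq.trans ?_ step2
  refine Finset.sum_bij'
    (fun x hx => ⟨x.2 - 1, eraseP x.1 x.2 (mem_of_sig x hx) (sig_sum x hx)⟩)
    (fun y hy => ⟨consP (y.1 + 1) (Nat.succ_pos _) y.2
        (by have := Finset.mem_range.1 (Finset.mem_sigma.1 hy).1; omega), y.1 + 1⟩)
    ?_ ?_ ?_ ?_ ?_
  · intro x hx
    have := sig_bounds x hx
    refine Finset.mem_sigma.2 ⟨?_, Finset.mem_univ _⟩
    show x.2 - 1 ∈ range (N + 1)
    exact Finset.mem_range.2 (by omega)
  · intro y hy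
    exact Finset.mem_sigma.2 ⟨Finset.mem_univ _,
      Multiset.mem_toFinset.2 (Multiset.mem_cons_self _ _)⟩
  · intro x hx
    have hb := sig_bounds x hx
    have ha1 : x.2 - 1 + 1 = x.2 := by omega
    refine Sigma.ext ?_ (heq_of_eq ?_)
    · refine Nat.Partition.ext ?_
      show (x.2 - 1 + 1) ::ₘ (x.1.parts.erase x.2) = x.1.parts
      rw [ha1, Multiset.cons_erase (mem_of_sig x hx)]
    · exact ha1
  · intro y hy
    refine Sigma.ext rfl (heq_of_eq ?_)
    refine Nat.Partition.ext ?_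
    show ((y.1 + 1) ::ₘ y.2.parts).erase (y.1 + 1) = y.2.parts
    exact Multiset.erase_cons_head _ _
  · intro x hx
    have hb := sig_bounds x hx
    have ha1 : x.2 - 1 + 1 = x.2 := by omega
    show c x.2 * _ = c (x.2 - 1 + 1) * _
    rw [ha1]
    rfl

lemma myA_eq_myB (c : ℕ → ℚ) : ∀ N, myA c N = myB c N := by
  intro N
  induction N using Nat.strong_induction_on with
  | _ N ih =>
    match N with
    | 0 => rw [myA_zero, myB_zero]
    | Nat.succ n =>
      have h1 := myA_rec c n
      have h2 := myB_rec c n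
      have h3 : ∑ k ∈ range (n + 1), c (k + 1) * myA c (n - k)
          = ∑ k ∈ range (n + 1), c (k + 1) * myB c (n - k) := by
        refine Finset.sum_congr rfl fun k hk => ?_
        rw [ih (n - k) (by omega)]
      rw [h3] at h1
      have hne : ((n : ℚ) + 1) ≠ 0 := by positivity
      have := h1.trans h2.symm
      exact mul_left_cancel₀ hne this

/-- `exp(∑_{n≥1} c_n t^n/n) = ∑_μ (∏_i c_{μ_i}) t^{|μ|}/z_μ`, the sum on the right
being over all partitions `μ` (the coefficient of `t^N` is a sum over the finitely
many partitions of `N`; the empty partition contributes `1`). -/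
theorem exp_sum_eq_sum_partitions (c : ℕ → ℚ) :
    fexp (PowerSeries.mk fun n => if n = 0 then 0 else c n / n) =
      PowerSeries.mk fun N =>
        ∑ μ : Nat.Partition N, (μ.parts.map c).prod / zPart μ.parts := by
  ext N
  simp only [fexp, PowerSeries.coeff_mk]
  exact myA_eq_myB c N
end
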